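/- Let 𝒪₁ ⊆ ℝ^d be open, let W be a smooth vector field on 𝒪₁, and let ρ : 𝒪₁ → ℝ be smooth, such that for some point q ∈ 𝒪₁ one has W(q) = 0, Wρ ≥ 0 on 𝒪₁, and Wρ > 0 on 𝒪₁ \ {q} (where Wρ denotes the derivative of ρ along W). Let 𝒪 ⊆ 𝒪₁ be an open set whose closure is compact and contained in 𝒪₁. If γ : [0,T) → 𝒪 (with T ∈ (0,∞]) is an integral curve of W (γ'(t) = W(γ(t)) for all t) which admits no extension to an integral curve on a strictly larger interval [0,T̃) with image in 𝒪, then either T = ∞ and lim_{t→∞} γ(t) = q, or for every compact K ⊆ 𝒪 there is T₀ < T such that γ(t) ∉ K for all t ∈ (T₀, T). -/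

import Mathlib

open Filter Set

/-- **Dichotomy for maximal forward integral curves near a gradient-like zero.**
Let `W` be a smooth vector field on an open set `𝒪₁ ⊆ ℝ^d`, `ρ` a smooth function with
`Wρ ≥ 0` on `𝒪₁` and `Wρ > 0` away from the unique zero `q` of `W`.  Let `𝒪` be open with
compact closure contained in `𝒪₁`.  If `γ : [0,T) → 𝒪` is a maximally forward-extended
integral curve of `W` (no extension to a strictly larger interval `[0,T')` with image in
`𝒪`), then either `T = ∞` and `γ(t) → q`, or `γ` eventually leaves every compact subset
of `𝒪`. -/
theorem maximal_integral_curve_dichotomy {d : ℕ}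
    (𝒪₁ 𝒪 : Set (EuclideanSpace ℝ (Fin d)))
    (h𝒪₁open : IsOpen 𝒪₁) (h𝒪open : IsOpen 𝒪)
    (h𝒪cpt : IsCompact (closure 𝒪)) (h𝒪sub : closure 𝒪 ⊆ 𝒪₁)
    (W : EuclideanSpace ℝ (Fin d) → EuclideanSpace ℝ (Fin d))
    (hW : ContDiffOn ℝ (⊤ : ℕ∞) W 𝒪₁)
    (ρ : EuclideanSpace ℝ (Fin d) → ℝ)
    (hρ : ContDiffOn ℝ (⊤ : ℕ∞) ρ 𝒪₁)
    (q : EuclideanSpace ℝ (Fin d)) (hq : q ∈ 𝒪₁) (hWq : W q = 0)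
    (hmono : ∀ p ∈ 𝒪₁, 0 ≤ fderiv ℝ ρ p (W p))
    (hstrict : ∀ p ∈ 𝒪₁, p ≠ q → 0 < fderiv ℝ ρ p (W p))
    (T : EReal) (hT : 0 < T)
    (γ : ℝ → EuclideanSpace ℝ (Fin d))
    (hγ𝒪 : ∀ t : ℝ, 0 ≤ t → (t : EReal) < T → γ t ∈ 𝒪)
    (hγflow : ∀ t : ℝ, 0 ≤ t → (t : EReal) < T → HasDerivAt γ (W (γ t)) t)
    (hmax : ¬ ∃ T' : EReal, T < T' ∧ ∃ γ' : ℝ → EuclideanSpace ℝ (Fin d),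
      (∀ t : ℝ, 0 ≤ t → (t : EReal) < T' → γ' t ∈ 𝒪 ∧ HasDerivAt γ' (W (γ' t)) t) ∧
      (∀ t : ℝ, 0 ≤ t → (t : EReal) < T → γ' t = γ t)) :
    (T = ⊤ ∧ Tendsto γ atTop (nhds q)) ∨
    (∀ K : Set (EuclideanSpace ℝ (Fin d)), K ⊆ 𝒪 → IsCompact K →
      ∃ T₀ : ℝ, (T₀ : EReal) < T ∧ ∀ t : ℝ, T₀ < t → (t : EReal) < T → γ t ∉ K) := by
  classical
  have h𝒪sub' : 𝒪 ⊆ 𝒪₁ := subset_closure.trans h𝒪sub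
  have hWc : ContinuousOn W 𝒪₁ := hW.continuousOn
  obtain ⟨M0, hM0⟩ := h𝒪cpt.exists_bound_of_continuousOn (hWc.mono h𝒪sub)
  set M : ℝ := max M0 0 + 1 with hMdef
  have hMpos : 0 < M := by positivity
  have hM : ∀ p ∈ closure 𝒪, ‖W p‖ ≤ M := by
    intro p hp
    have h1 := hM0 p hp
    have h2 : M0 ≤ max M0 0 := le_max_left _ _
    rw [hMdef]
    linarith
  -- speed bound
  have hspeed : ∀ s t : ℝ, 0 ≤ s → s ≤ t → (t : EReal) < T → ‖γ t - γ s‖ ≤ M * (t - s) := by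
    intro s t hs hst htT
    have hmem : ∀ x ∈ Icc s t, (0 ≤ x ∧ (x : EReal) < T) := fun x hx =>
      ⟨hs.trans hx.1, lt_of_le_of_lt (EReal.coe_le_coe_iff.2 hx.2) htT⟩
    have := Convex.norm_image_sub_le_of_norm_hasDerivWithin_le
      (f := γ) (f' := fun x => W (γ x)) (s := Icc s t)
      (fun x hx => (hγflow x (hmem x hx).1 (hmem x hx).2).hasDerivWithinAt)
      (fun x hx => hM _ (subset_closure (hγ𝒪 x (hmem x hx).1 (hmem x hx).2)))
      (convex_Icc s t) (left_mem_Icc.2 hst) (right_mem_Icc.2 hst)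
    calc ‖γ t - γ s‖ ≤ M * ‖t - s‖ := this
      _ = M * (t - s) := by rw [Real.norm_eq_abs, abs_of_nonneg (by linarith)]
  -- chain rule
  have hρdiff : ∀ p ∈ 𝒪₁, HasFDerivAt ρ (fderiv ℝ ρ p) p := fun p hp =>
    ((hρ.contDiffAt (h𝒪₁open.mem_nhds hp)).differentiableAt (by simp)).hasFDerivAt
  have hfd : ∀ t : ℝ, 0 ≤ t → (t : EReal) < T →
      HasDerivAt (fun s => ρ (γ s)) (fderiv ℝ ρ (γ t) (W (γ t))) t := fun t ht htT =>
    (hρdiff _ (h𝒪sub' (hγ𝒪 t ht htT))).comp_hasDerivAt t (hγflow t ht htT)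
  by_cases hTtop : T = ⊤
  · -- infinite time: Lyapunov argument
    left
    refine ⟨hTtop, ?_⟩
    subst hTtop
    have hlt : ∀ t : ℝ, (t : EReal) < ⊤ := fun t => EReal.coe_lt_top t
    set f : ℝ → ℝ := fun t => ρ (γ t) with hfdef
    have key : ∀ a b c : ℝ, 0 ≤ a → a ≤ b →
        (∀ x ∈ Ioo a b, c ≤ fderiv ℝ ρ (γ x) (W (γ x))) → c * (b - a) ≤ f b - f a := by
      intro a b c ha hab hc
      have hg : MonotoneOn (fun t => f t - c * t) (Icc a b) := by
        apply monotoneOn_of_deriv_nonneg (convex_Icc a b)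
        · intro x hx
          exact (((hfd x (ha.trans hx.1) (hlt x)).sub
            ((hasDerivAt_id x).const_mul c)).continuousAt).continuousWithinAt
        · intro x hx
          rw [interior_Icc] at hx
          exact (((hfd x (ha.trans hx.1.le) (hlt x)).sub
            ((hasDerivAt_id x).const_mul c)).differentiableAt).differentiableWithinAt
        · intro x hx
          rw [interior_Icc] at hx
          have hd : HasDerivAt (fun t => f t - c * t)
              ((fderiv ℝ ρ (γ x)) (W (γ x)) - c) x := by
            simpa only [mul_one, Pi.sub_def, id] using (hfd x (ha.trans hx.1.le) (hlt x)).sub ((hasDerivAt_id x).const_mul c)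
          rw [hd.deriv]
          have := hc x hx
          linarith
      have := hg (left_mem_Icc.2 hab) (right_mem_Icc.2 hab) hab
      simp only [] at this
      nlinarith [this]
    have hmono' : ∀ a b : ℝ, 0 ≤ a → a ≤ b → f a ≤ f b := by
      intro a b ha hab
      have := key a b 0 ha hab (fun x hx =>
        hmono _ (h𝒪sub' (hγ𝒪 x (ha.trans hx.1.le) (hlt x))))
      linarith
    obtain ⟨C, hC⟩ := h𝒪cpt.exists_bound_of_continuousOn (hρ.continuousOn.mono h𝒪sub)
    have hfC : ∀ t : ℝ, 0 ≤ t → f t ≤ C := fun t ht =>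
      (le_abs_self _).trans (Real.norm_eq_abs _ ▸ hC _ (subset_closure (hγ𝒪 t ht (hlt t))))
    set ftil : ℝ → ℝ := fun t => f (max t 0) with hftil
    have hftilmono : Monotone ftil := fun a b hab =>
      hmono' _ _ (le_max_right _ _) (max_le_max hab le_rfl)
    have hftilbdd : BddAbove (range ftil) := by
      refine ⟨C, ?_⟩
      rintro _ ⟨t, rfl⟩
      exact hfC _ (le_max_right _ _)
    have hconv := tendsto_atTop_ciSup hftilmono hftilbdd
    set Lf := ⨆ t, ftil t
    by_contra hns
    rw [Metric.tendsto_nhds] at hns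
    push_neg at hns
    obtain ⟨ε, hε, hfreq⟩ := hns
    simp only [← not_lt] at hfreq
    have hfreq' : ∀ a : ℝ, ∃ b ≥ a, ε ≤ dist (γ b) q := by
      intro a
      obtain ⟨b, hb1, hb2⟩ := frequently_atTop.1 hfreq a
      exact ⟨b, hb1, not_lt.1 hb2⟩
    choose u hu hud using hfreq'
    -- minimum of Wρ away from q
    set S : Set (EuclideanSpace ℝ (Fin d)) := closure 𝒪 \ Metric.ball q (ε / 2) with hSdef
    have hS𝒪₁ : S ⊆ 𝒪₁ := (diff_subset).trans h𝒪sub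
    have hScpt : IsCompact S := h𝒪cpt.diff Metric.isOpen_ball
    have hSne : S.Nonempty := by
      refine ⟨γ (u 0), subset_closure (hγ𝒪 _ (hu 0) (hlt _)), ?_⟩
      simp only [Metric.mem_ball, not_lt]
      linarith [hud 0]
    have hWρcont : ContinuousOn (fun p => fderiv ℝ ρ p (W p)) S :=
      ((hρ.continuousOn_fderiv_of_isOpen h𝒪₁open (by exact_mod_cast le_top)).clm_apply hWc).mono hS𝒪₁
    obtain ⟨pm, hpmS, hpmmin⟩ := hScpt.exists_isMinOn hSne hWρcont
    set c : ℝ := fderiv ℝ ρ pm (W pm) with hcdef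
    have hcpos : 0 < c := by
      refine hstrict pm (hS𝒪₁ hpmS) ?_
      intro h
      have := hpmS.2
      rw [h] at this
      exact this (Metric.mem_ball_self (by linarith))
    set δ : ℝ := ε / (2 * M) with hδdef
    have hδpos : 0 < δ := by positivity
    have hMδ : M * δ = ε / 2 := by
      rw [hδdef]; field_simp
    have hgain : ∀ a : ℝ, 0 ≤ a → ε ≤ dist (γ a) q → c * δ ≤ f (a + δ) - f a := by
      intro a ha hda
      have := key a (a + δ) c ha (by linarith) ?_
      · linarith [this]
      intro x hx
      have hmemS : γ x ∈ S := by
        refine ⟨subset_closure (hγ𝒪 x (ha.trans hx.1.le) (hlt x)), ?_⟩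
        simp only [Metric.mem_ball, not_lt]
        have h1 : ‖γ x - γ a‖ ≤ M * (x - a) := hspeed a x ha hx.1.le (hlt x)
        have h2 : M * (x - a) ≤ M * δ :=
          mul_le_mul_of_nonneg_left (by linarith [hx.2]) hMpos.le
        have h5 : dist (γ x) (γ a) ≤ ε / 2 := by
          rw [dist_eq_norm]
          calc ‖γ x - γ a‖ ≤ M * (x - a) := h1
            _ ≤ M * δ := h2
            _ = ε / 2 := hMδ
        have htri := dist_triangle (γ a) (γ x) q
        have h4 : dist (γ a) (γ x) = dist (γ x) (γ a) := dist_comm _ _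
        linarith
      exact isMinOn_iff.1 hpmmin _ hmemS
    -- take limits
    have hut : Tendsto u atTop atTop :=
      tendsto_atTop_mono hu tendsto_id
    have h1 : Tendsto (fun a => ftil (u a)) atTop (nhds Lf) := hconv.comp hut
    have h2 : Tendsto (fun a => ftil (u a + δ)) atTop (nhds Lf) :=
      hconv.comp (tendsto_atTop_add_const_right _ δ hut)
    have h3 : Tendsto (fun a => ftil (u a + δ) - ftil (u a)) atTop (nhds 0) := by
      simpa using h2.sub h1
    have h4 : c * δ ≤ 0 := by
      refine ge_of_tendsto h3 ?_
      filter_upwards [eventually_ge_atTop (0 : ℝ)] with a ha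
      have hu0 : 0 ≤ u a := ha.trans (hu a)
      have e1 : ftil (u a) = f (u a) := by simp [hftil, max_eq_left hu0]
      have e2 : ftil (u a + δ) = f (u a + δ) := by
        simp [hftil, max_eq_left (by linarith : (0:ℝ) ≤ u a + δ)]
      rw [e1, e2]
      exact hgain (u a) hu0 (hud a)
    nlinarith
  · -- finite time: escape to the boundary
    right
    have hTbot : T ≠ ⊥ := fun h => by simp [h] at hT
    lift T to ℝ using ⟨hTtop, hTbot⟩ with Tr
    have hTr0 : (0 : ℝ) < Tr := EReal.coe_lt_coe_iff.1 (by exact_mod_cast hT)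
    intro K hK𝒪 hKcpt
    by_contra hcon
    push_neg at hcon
    have hKfreq : ∀ T₀ : ℝ, T₀ < Tr → ∃ t, T₀ < t ∧ t < Tr ∧ γ t ∈ K := by
      intro T₀ hT₀
      obtain ⟨t, ht1, ht2, ht3⟩ := hcon T₀ (EReal.coe_lt_coe_iff.2 hT₀)
      exact ⟨t, ht1, EReal.coe_lt_coe_iff.1 ht2, ht3⟩
    -- Cauchy limit of γ at Tr
    have hcau : Cauchy (Filter.map γ (nhdsWithin Tr (Iio Tr))) := by
      rw [Metric.cauchy_iff]
      refine ⟨Filter.map_neBot, fun ε hε => ?_⟩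
      set δ : ℝ := ε / (2 * M) with hδdef
      have hδ : 0 < δ := by positivity
      have hMδ : M * δ = ε / 2 := by rw [hδdef]; field_simp
      refine ⟨γ '' Ioo (max (Tr - δ) 0) Tr, Filter.image_mem_map ?_, ?_⟩
      · exact Ioo_mem_nhdsLT_of_mem ⟨max_lt (by linarith) hTr0, le_rfl⟩
      · rintro _ ⟨x, hx, rfl⟩ _ ⟨y, hy, rfl⟩
        have key : ∀ x y : ℝ, x ∈ Ioo (max (Tr - δ) 0) Tr → y ∈ Ioo (max (Tr - δ) 0) Tr →
            x ≤ y → dist (γ x) (γ y) < ε := by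
          intro x y hx hy hxy
          rw [dist_comm, dist_eq_norm]
          have h1 := hspeed x y (le_of_lt (lt_of_le_of_lt (le_max_right _ _) hx.1))
            hxy (EReal.coe_lt_coe_iff.2 hy.2)
          have h2 : y - x ≤ δ := by
            have := lt_of_le_of_lt (le_max_left _ _) hx.1
            linarith [hy.2]
          have h3 : M * (y - x) ≤ M * δ := mul_le_mul_of_nonneg_left h2 hMpos.le
          calc ‖γ y - γ x‖ ≤ M * (y - x) := h1
            _ ≤ M * δ := h3
            _ = ε / 2 := hMδ
            _ < ε := by linarith
        rcases le_total x y with h | h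
        · exact key x y hx hy h
        · rw [dist_comm]; exact key y x hy hx h
    obtain ⟨L, hL⟩ := CompleteSpace.complete hcau
    have hLt : Tendsto γ (nhdsWithin Tr (Iio Tr)) (nhds L) := hL
    -- L ∈ K
    choose s hs1 hs2 hs3 using fun n : ℕ => hKfreq (Tr - 1 / (n + 1))
      (by have : (0:ℝ) < 1 / (n + 1) := by positivity
          linarith)
    have hstend : Tendsto s atTop (nhds Tr) := by
      refine tendsto_of_tendsto_of_tendsto_of_le_of_le
        (g := fun n : ℕ => Tr - 1 / (n + 1)) (h := fun _ => Tr) ?_ tendsto_const_nhds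
        (fun n => (hs1 n).le) (fun n => (hs2 n).le)
      have := tendsto_one_div_add_atTop_nhds_zero_nat (𝕜 := ℝ)
      simpa using tendsto_const_nhds.sub this
    have hstend' : Tendsto s atTop (nhdsWithin Tr (Iio Tr)) :=
      tendsto_nhdsWithin_of_tendsto_nhds_of_eventually_within s hstend
        (Eventually.of_forall fun n => hs2 n)
    have hLK : L ∈ K := hKcpt.isClosed.mem_of_tendsto (hLt.comp hstend')
      (Eventually.of_forall fun n => hs3 n)
    have hL𝒪 : L ∈ 𝒪 := hK𝒪 hLK
    have hL𝒪₁ : L ∈ 𝒪₁ := h𝒪sub' hL𝒪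
    -- the curve extended by continuity
    set γb : ℝ → EuclideanSpace ℝ (Fin d) := fun t => if t < Tr then γ t else L with hγbdef
    have hγbγ : ∀ {t : ℝ}, t < Tr → γb t = γ t := fun {t} h => if_pos h
    have hγbTr : γb Tr = L := if_neg (lt_irrefl _)
    have hγbIio : Tendsto γb (nhdsWithin Tr (Iio Tr)) (nhds L) := by
      refine hLt.congr' ?_
      filter_upwards [self_mem_nhdsWithin] with y hy
      exact (hγbγ hy).symm
    have hγbflow : ∀ t : ℝ, 0 ≤ t → t < Tr → HasDerivAt γb (W (γb t)) t := by
      intro t ht htTr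
      have hev : γb =ᶠ[nhds t] γ := by
        filter_upwards [Iio_mem_nhds htTr] with y hy
        exact hγbγ hy
      have := (hγflow t ht (EReal.coe_lt_coe_iff.2 htTr)).congr_of_eventuallyEq hev
      rwa [← hγbγ htTr] at this
    have hγbcont : ContinuousOn γb (Icc 0 Tr) := by
      intro x hx
      rcases eq_or_lt_of_le hx.2 with rfl | hxTr
      · rw [ContinuousWithinAt, hγbTr]
        refine Tendsto.mono_left ?_ (nhdsWithin_mono _ Icc_subset_Iic_self)
        rw [← Iio_union_right, nhdsWithin_union, tendsto_sup]
        refine ⟨hγbIio, ?_⟩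
        rw [nhdsWithin_singleton]
        simpa [hγbTr] using (tendsto_pure_nhds γb x)
      · exact ((hγbflow x hx.1 hxTr).continuousAt).continuousWithinAt
    set g : ℝ → EuclideanSpace ℝ (Fin d) := fun t => W (γb t) with hgdef
    have hγbmaps : ∀ x ∈ Icc (0:ℝ) Tr, γb x ∈ 𝒪₁ := by
      intro x hx
      rcases lt_or_ge x Tr with h | h
      · rw [hγbγ h]; exact h𝒪sub' (hγ𝒪 x hx.1 (EReal.coe_lt_coe_iff.2 h))
      · have : x = Tr := le_antisymm hx.2 h
        rw [this, hγbTr]; exact hL𝒪₁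
    have hgc : ContinuousOn g (Icc 0 Tr) := hWc.comp hγbcont hγbmaps
    have hgint : ∀ t ∈ Icc (0:ℝ) Tr, IntervalIntegrable g MeasureTheory.volume 0 t := by
      intro t ht
      refine (hgc.mono ?_).intervalIntegrable
      rw [uIcc_of_le ht.1]
      exact Icc_subset_Icc le_rfl ht.2
    set P : ℝ → EuclideanSpace ℝ (Fin d) := fun u => ∫ x in (0:ℝ)..u, g x with hPdef
    have hP : ∀ t ∈ Ico (0:ℝ) Tr, γb t = γb 0 + P t := by
      intro t ht
      have hder : ∀ x ∈ uIcc (0:ℝ) t, HasDerivAt γb (g x) x := by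
        intro x hx
        rw [uIcc_of_le ht.1] at hx
        exact hγbflow x hx.1 (lt_of_le_of_lt hx.2 ht.2)
      have := intervalIntegral.integral_eq_sub_of_hasDerivAt hder (hgint t ⟨ht.1, ht.2.le⟩)
      rw [hPdef]
      simp only []
      rw [this]
      abel
    have hIccmem : Icc (0:ℝ) Tr ∈ nhdsWithin Tr (Iic Tr) := by
      rw [← Ici_inter_Iic]
      exact Filter.inter_mem (mem_nhdsWithin_of_mem_nhds (Ici_mem_nhds hTr0))
        self_mem_nhdsWithin
    have hPd : HasDerivWithinAt P (g Tr) (Iic Tr) Tr := by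
      have hmeas : StronglyMeasurableAtFilter g (nhdsWithin Tr (Iic Tr)) MeasureTheory.volume :=
        ⟨Icc 0 Tr, hIccmem, hgc.aestronglyMeasurable measurableSet_Icc⟩
      have hcont : ContinuousWithinAt g (Iic Tr) Tr := by
        have h1 : ContinuousWithinAt g (Icc 0 Tr) Tr := hgc Tr ⟨hTr0.le, le_rfl⟩
        rwa [ContinuousWithinAt, nhdsWithin_Icc_eq_nhdsLE hTr0] at h1
      exact intervalIntegral.integral_hasDerivWithinAt_right
        (hgint Tr ⟨hTr0.le, le_rfl⟩) hmeas hcont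
    have hPTr : γb Tr = γb 0 + P Tr := by
      have h2 : Tendsto (fun u => γb 0 + P u) (nhdsWithin Tr (Iio Tr))
          (nhds (γb 0 + P Tr)) :=
        tendsto_const_nhds.add ((hPd.continuousWithinAt).mono_left
          (nhdsWithin_mono _ Iio_subset_Iic_self))
      have heq : (fun u => γb 0 + P u) =ᶠ[nhdsWithin Tr (Iio Tr)] γb := by
        filter_upwards [Ioo_mem_nhdsLT_of_mem (⟨hTr0, le_rfl⟩ : Tr ∈ Ioc 0 Tr)] with u hu
        exact (hP u ⟨hu.1.le, hu.2⟩).symm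
      have := tendsto_nhds_unique (h2.congr' heq) hγbIio
      rw [hγbTr]
      exact this.symm
    have hPall : ∀ u ∈ Icc (0:ℝ) Tr, γb u = γb 0 + P u := by
      intro u hu
      rcases eq_or_lt_of_le hu.2 with rfl | h
      · exact hPTr
      · exact hP u ⟨hu.1, h⟩
    have hγbd : HasDerivWithinAt γb (W L) (Iic Tr) Tr := by
      have h0 : HasDerivWithinAt (fun u => γb 0 + P u) (g Tr) (Icc 0 Tr) Tr :=
        (hPd.const_add _).mono Icc_subset_Iic_self
      have h2 : HasDerivWithinAt γb (g Tr) (Icc 0 Tr) Tr :=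
        h0.congr hPall (hPall Tr ⟨hTr0.le, le_rfl⟩)
      have h3 := h2.mono_of_mem_nhdsWithin hIccmem
      simp only [hgdef] at h3
      rwa [hγbTr] at h3
    -- local solution through L at time Tr
    have hWL : ContDiffAt ℝ 1 W L := (hW.contDiffAt (h𝒪₁open.mem_nhds hL𝒪₁)).of_le (by exact_mod_cast le_top)
    obtain ⟨σ, hσTr, ε, hεpos, hσ⟩ := hWL.exists_forall_mem_closedBall_exists_eq_forall_mem_Ioo_hasDerivAt₀ Tr
    have hσcont : ContinuousAt σ Tr :=
      (hσ Tr ⟨by linarith, by linarith⟩).continuousAt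
    have hU : σ ⁻¹' 𝒪 ∩ Ioo (Tr - ε) (Tr + ε) ∈ nhds Tr := by
      refine Filter.inter_mem (hσcont.preimage_mem_nhds (h𝒪open.mem_nhds ?_))
        (Ioo_mem_nhds (by linarith) (by linarith))
      rw [hσTr]; exact hL𝒪
    obtain ⟨e, hepos, hball⟩ := Metric.mem_nhds_iff.1 hU
    have hballmem : ∀ t : ℝ, Tr ≤ t → t < Tr + e / 2 → σ t ∈ 𝒪 ∧ t ∈ Ioo (Tr - ε) (Tr + ε) := by
      intro t ht1 ht2
      have : t ∈ Metric.ball Tr e := by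
        rw [Metric.mem_ball, Real.dist_eq, abs_of_nonneg (by linarith)]
        linarith
      exact hball this
    set γ' : ℝ → EuclideanSpace ℝ (Fin d) := fun t => if t < Tr then γ t else σ t with hγ'def
    have hγ'σ : ∀ {t : ℝ}, Tr ≤ t → γ' t = σ t := fun {t} h => if_neg (not_lt.2 h)
    refine hmax ⟨((Tr + e / 2 : ℝ) : EReal), by exact_mod_cast (by linarith : Tr < Tr + e / 2),
      γ', ?_, ?_⟩
    · intro t ht htT'
      have htT' : t < Tr + e / 2 := EReal.coe_lt_coe_iff.1 htT'
      rcases lt_trichotomy t Tr with hlt | rfl | hgt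
      · constructor
        · rw [hγ'def]; simp only [if_pos hlt]
          exact hγ𝒪 t ht (EReal.coe_lt_coe_iff.2 hlt)
        · have hev : γ' =ᶠ[nhds t] γ := by
            filter_upwards [Iio_mem_nhds hlt] with y hy
            exact if_pos hy
          have hd := (hγflow t ht (EReal.coe_lt_coe_iff.2 hlt)).congr_of_eventuallyEq hev
          have : γ' t = γ t := if_pos hlt
          rw [this]
          exact hd
      · constructor
        · rw [hγ'σ le_rfl, hσTr]; exact hL𝒪
        · have hleft : HasDerivWithinAt γ' (W L) (Iic t) t := by
            refine hγbd.congr ?_ ?_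
            · intro u hu
              rcases lt_or_eq_of_le (mem_Iic.1 hu) with h | h
              · have e1 : γ' u = γ u := if_pos h
                rw [e1, hγbγ h]
              · subst h
                rw [hγ'σ le_rfl, hσTr, hγbTr]
            · rw [hγ'σ le_rfl, hσTr, hγbTr]
          have hright : HasDerivWithinAt γ' (W L) (Ici t) t := by
            have h1 : HasDerivAt σ (W (σ t)) t := hσ t ⟨by linarith, by linarith⟩
            rw [hσTr] at h1
            refine h1.hasDerivWithinAt.congr ?_ ?_
            · intro u hu; exact hγ'σ (mem_Ici.1 hu)
            · exact hγ'σ le_rfl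
          have := hleft.union hright
          rw [Iic_union_Ici, hasDerivWithinAt_univ] at this
          have hval : γ' t = L := by rw [hγ'σ le_rfl, hσTr]
          rw [hval]
          exact this
      · have hmem := hballmem t hgt.le htT'
        constructor
        · rw [hγ'σ hgt.le]; exact hmem.1
        · have hev : γ' =ᶠ[nhds t] σ := by
            filter_upwards [Ioi_mem_nhds hgt] with y hy
            exact hγ'σ (le_of_lt hy)
          have hd := (hσ t hmem.2).congr_of_eventuallyEq hev
          rw [hγ'σ hgt.le]
          exact hd
    · intro t ht htT
      exact if_pos (EReal.coe_lt_coe_iff.1 htT)
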